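/- Let κ be a cardinal such that □_κ holds. Then for every stationary subset S ⊆ κ⁺ there is a stationary subset T ⊆ S that does not reflect. -/

import Mathlib

/-!
Statement 1: If `□_κ` holds, then every stationary subset `S ⊆ κ⁺` has a
stationary subset `T ⊆ S` that does not reflect.
-/

namespace PaperStatementOne

open Ordinal Set

/-- `C` is closed in `lam`: every ordinal `δ < lam` which is a limit of points of `C`
below it belongs to `C`. -/
def IsClosedIn (C : Set Ordinal) (lam : Ordinal) : Prop :=
  ∀ δ < lam, (C ∩ Set.Iio δ).Nonempty → sSup (C ∩ Set.Iio δ) = δ → δ ∈ C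

/-- `C` is unbounded in `lam`. -/
def IsUnboundedIn (C : Set Ordinal) (lam : Ordinal) : Prop :=
  ∀ β < lam, ∃ γ ∈ C, β ≤ γ ∧ γ < lam

/-- `C` is a club (closed and unbounded) subset of `lam`. -/
def IsClubIn (C : Set Ordinal) (lam : Ordinal) : Prop :=
  C ⊆ Set.Iio lam ∧ IsClosedIn C lam ∧ IsUnboundedIn C lam

/-- `S` is a stationary subset of `lam`: it meets every club subset of `lam`. -/
def IsStationaryIn (S : Set Ordinal) (lam : Ordinal) : Prop :=
  S ⊆ Set.Iio lam ∧ ∀ C : Set Ordinal, IsClubIn C lam → (S ∩ C).Nonempty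

/-- `S` reflects at `α`: `cf α > ω` and `S ∩ α` is stationary in `α`. -/
def ReflectsAt (S : Set Ordinal) (α : Ordinal) : Prop :=
  Cardinal.aleph0 < α.cof ∧ IsStationaryIn (S ∩ Set.Iio α) α

/-- A stationary `S ⊆ lam` reflects if it reflects at some `α < lam`. -/
def Reflects (S : Set Ordinal) (lam : Ordinal) : Prop :=
  ∃ α < lam, ReflectsAt S α

/-- The set of accumulation points of `C`. -/
def AccPts (C : Set Ordinal) : Set Ordinal :=
  {β | (C ∩ Set.Iio β).Nonempty ∧ sSup (C ∩ Set.Iio β) = β}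

/-- The order type of a set of ordinals. -/
noncomputable def ordType (C : Set Ordinal.{0}) : Ordinal.{1} :=
  Ordinal.type (Subrel ((· < ·) : Ordinal.{0} → Ordinal.{0} → Prop) (· ∈ C))

/-- `⟨C α | α < κ⁺ limit⟩` is a `□_κ`-sequence: each `C α` is club in `α`, has order
type at most `κ`, and the sequence is coherent. -/
def IsSquareSeq (κ : Cardinal.{0}) (C : Ordinal.{0} → Set Ordinal.{0}) : Prop :=
  ∀ α : Ordinal, α < (Order.succ κ).ord → Order.IsSuccLimit α →
    IsClubIn (C α) α ∧ ordType (C α) ≤ Ordinal.lift.{1,0} κ.ord ∧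
      ∀ β ∈ AccPts (C α), C β = C α ∩ Set.Iio β

/-- `□_κ` holds. -/
def Square (κ : Cardinal.{0}) : Prop :=
  ∃ C : Ordinal → Set Ordinal, IsSquareSeq κ C

/-! ### Auxiliary lemmas -/

lemma bddAbove_of_subset_Iio {s : Set Ordinal.{0}} {δ : Ordinal.{0}} (h : s ⊆ Iio δ) : BddAbove s :=
  ⟨δ, fun _ hx => (h hx).le⟩

lemma sSup_eq_of_forall_exists {s : Set Ordinal.{0}} {δ : Ordinal.{0}} (hsub : s ⊆ Iio δ)
    (h : ∀ ε < δ, ∃ γ ∈ s, ε < γ) : sSup s = δ := by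
  refine le_antisymm (csSup_le' fun x hx => (hsub hx).le) (le_of_forall_lt fun ε hε => ?_)
  obtain ⟨γ, hγs, hγ⟩ := h ε hε
  exact lt_of_lt_of_le hγ (le_csSup (bddAbove_of_subset_Iio hsub) hγs)

lemma exists_mem_lt_of_lt_sSup {s : Set Ordinal.{0}} {a : Ordinal.{0}} (h : a < sSup s) :
    ∃ γ ∈ s, a < γ := by
  rcases s.eq_empty_or_nonempty with rfl | hne
  · rw [csSup_empty] at h
    exact absurd h (zero_le (a := a)).not_gt
  · exact exists_lt_of_lt_csSup hne h

/-- The intersection of fewer than `cof L` clubs in `L` (of uncountable cofinality)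
is a club in `L`. -/
lemma isClubIn_iInter {ι : Type} [Nonempty ι] {D : ι → Set Ordinal.{0}} {L : Ordinal.{0}}
    (hcof : Cardinal.aleph0 < L.cof) (hι : Cardinal.mk ι < L.cof)
    (hD : ∀ i, IsClubIn (D i) L) : IsClubIn (⋂ i, D i) L := by
  classical
  have hL : Order.IsSuccLimit L := Ordinal.aleph0_le_cof.1 hcof.le
  refine ⟨fun x hx => (hD (Classical.arbitrary ι)).1 (mem_iInter.1 hx _), ?_, ?_⟩
  · intro δ hδ hne hsup
    refine mem_iInter.2 fun i => (hD i).2.1 δ hδ ?_ ?_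
    · obtain ⟨x, hx⟩ := hne
      exact ⟨x, mem_iInter.1 hx.1 i, hx.2⟩
    · refine le_antisymm (csSup_le' fun x hx => hx.2.le) ?_
      calc δ = sSup ((⋂ i, D i) ∩ Iio δ) := hsup.symm
        _ ≤ sSup (D i ∩ Iio δ) := csSup_le_csSup
            (bddAbove_of_subset_Iio fun x hx => hx.2) hne
            (fun x hx => ⟨mem_iInter.1 hx.1 i, hx.2⟩)
  · intro β hβ
    have hstep : ∀ (i : ι) (δ : Ordinal), δ < L → ∃ γ ∈ D i, δ + 1 ≤ γ ∧ γ < L := by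
      intro i δ hδ
      exact (hD i).2.2 (δ + 1) (by rw [Ordinal.add_one_eq_succ]; exact hL.succ_lt hδ)
    let g : ι → Ordinal → Ordinal := fun i δ =>
      if h : δ < L then (hstep i δ h).choose else 0
    have hg : ∀ i δ, δ < L → g i δ ∈ D i ∧ δ + 1 ≤ g i δ ∧ g i δ < L := by
      intro i δ h
      simp only [g, dif_pos h]
      exact (hstep i δ h).choose_spec
    let nxt : Ordinal → Ordinal := fun δ => ⨆ i, g i δ
    have hnxt : ∀ δ < L, δ < nxt δ ∧ nxt δ < L ∧ ∀ i, ∃ γ ∈ D i, δ < γ ∧ γ ≤ nxt δ := by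
      intro δ hδ
      have h1 : nxt δ < L := Ordinal.iSup_lt_of_lt_cof hι fun i => (hg i δ hδ).2.2
      have h2 : ∀ i, ∃ γ ∈ D i, δ < γ ∧ γ ≤ nxt δ := fun i =>
        ⟨g i δ, (hg i δ hδ).1,
          lt_of_lt_of_le (by rw [Ordinal.add_one_eq_succ]; exact Order.lt_succ δ) (hg i δ hδ).2.1,
          Ordinal.le_iSup _ i⟩
      obtain ⟨γ, _, hγ1, hγ2⟩ := h2 (Classical.arbitrary ι)
      exact ⟨lt_of_lt_of_le hγ1 hγ2, h1, h2⟩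
    let s : ℕ → Ordinal := fun n => Nat.rec β (fun _ x => nxt x) n
    have hs_lt : ∀ n, s n < L := by
      intro n
      induction n with
      | zero => exact hβ
      | succ n ih => exact (hnxt _ ih).2.1
    have hs_mono : ∀ n, s n < s (n + 1) := fun n => (hnxt _ (hs_lt n)).1
    set dstar := ⨆ n, s n with hdstar
    have hdL : dstar < L := Ordinal.iSup_lt_of_lt_cof (by rw [Cardinal.mk_nat]; exact hcof) hs_lt
    have hsle : ∀ n, s n ≤ dstar := fun n => Ordinal.le_iSup s n
    have hmem : ∀ i, dstar ∈ D i := by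
      intro i
      refine (hD i).2.1 dstar hdL ?_ ?_
      · obtain ⟨γ, hγD, hγ1, hγ2⟩ := (hnxt _ (hs_lt 0)).2.2 i
        exact ⟨γ, hγD, lt_of_le_of_lt hγ2 (lt_of_lt_of_le (hs_mono 1) (hsle 2))⟩
      · refine sSup_eq_of_forall_exists (fun x hx => hx.2) fun ε hε => ?_
        obtain ⟨n, hn⟩ := Ordinal.lt_iSup_iff.1 hε
        obtain ⟨γ, hγD, hγ1, hγ2⟩ := (hnxt _ (hs_lt n)).2.2 i
        exact ⟨γ, ⟨hγD, lt_of_le_of_lt hγ2 (lt_of_lt_of_le (hs_mono (n + 1)) (hsle (n + 2)))⟩,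
          hn.trans hγ1⟩
    exact ⟨dstar, mem_iInter.2 hmem, hsle 0, hdL⟩

/-- The intersection of two clubs in `L` (of uncountable cofinality) is a club. -/
lemma isClubIn_inter {A B : Set Ordinal.{0}} {L : Ordinal.{0}} (hcof : Cardinal.aleph0 < L.cof)
    (hA : IsClubIn A L) (hB : IsClubIn B L) : IsClubIn (A ∩ B) L := by
  have h := isClubIn_iInter (ι := Bool) (D := fun b => cond b A B) hcof
    ((Cardinal.lt_aleph0_of_finite Bool).trans hcof) (fun b => by cases b <;> assumption)
  have he : (⋂ b : Bool, cond b A B) = A ∩ B := by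
    ext x
    simp [Bool.forall_bool, and_comm]
  rwa [he] at h

lemma stationary_inter {S C : Set Ordinal.{0}} {L : Ordinal.{0}} (hcof : Cardinal.aleph0 < L.cof)
    (hS : IsStationaryIn S L) (hC : IsClubIn C L) : IsStationaryIn (S ∩ C) L := by
  refine ⟨fun x hx => hS.1 hx.1, fun D hD => ?_⟩
  obtain ⟨x, hx⟩ := hS.2 (C ∩ D) (isClubIn_inter hcof hC hD)
  exact ⟨x, ⟨hx.1, hx.2.1⟩, hx.2.2⟩

/-- The limit ordinals below `L` form a club, provided `L` is closed under `· + ω`. -/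
lemma isClubIn_limits {L : Ordinal.{0}} (hL : Order.IsSuccLimit L) (hω : ∀ β < L, β + Ordinal.omega0 < L) :
    IsClubIn (Iio L ∩ {β | Order.IsSuccLimit β}) L := by
  refine ⟨fun x hx => hx.1, ?_, ?_⟩
  · intro δ hδ hne hsup
    refine ⟨hδ, ?_, ?_⟩
    · obtain ⟨x, hx⟩ := hne
      exact not_isMin_of_lt hx.2
    · refine Order.isSuccPrelimit_of_succ_lt fun a ha => ?_
      obtain ⟨y, hy, hay⟩ := exists_mem_lt_of_lt_sSup (hsup.symm ▸ ha)
      exact lt_trans (hy.1.2.succ_lt hay) hy.2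
  · intro β hβ
    exact ⟨β + Ordinal.omega0, ⟨hω β hβ, Ordinal.isSuccLimit_add β Ordinal.isSuccLimit_omega0⟩,
      le_self_add, hω β hβ⟩

/-- The accumulation points of a club in `α` (of uncountable cofinality) form a club in `α`. -/
lemma accPts_isClubIn {C : Set Ordinal.{0}} {α : Ordinal.{0}} (hα : Cardinal.aleph0 < α.cof)
    (hC : IsClubIn C α) : IsClubIn (AccPts C ∩ Iio α) α := by
  classical
  have hαlim : Order.IsSuccLimit α := Ordinal.aleph0_le_cof.1 hα.le
  refine ⟨fun x hx => hx.2, ?_, ?_⟩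
  · intro δ hδ hne hsup
    obtain ⟨x, hx⟩ := hne
    refine ⟨⟨?_, ?_⟩, hδ⟩
    · obtain ⟨y, hy⟩ := hx.1.1.1
      exact ⟨y, hy.1, Set.mem_Iio.2 (lt_trans hy.2 hx.2)⟩
    · refine sSup_eq_of_forall_exists (fun z hz => hz.2) fun ε hε => ?_
      obtain ⟨y, hy, hεy⟩ := exists_mem_lt_of_lt_sSup (hsup.symm ▸ hε)
      obtain ⟨γ, hγ, hεγ⟩ := exists_mem_lt_of_lt_sSup (hy.1.1.2.symm ▸ hεy)
      exact ⟨γ, ⟨hγ.1, Set.mem_Iio.2 (lt_trans hγ.2 hy.2)⟩, hεγ⟩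
  · intro β hβ
    have hstep : ∀ δ < α, ∃ γ ∈ C, δ + 1 ≤ γ ∧ γ < α := by
      intro δ hδ
      exact hC.2.2 (δ + 1) (by rw [Ordinal.add_one_eq_succ]; exact hαlim.succ_lt hδ)
    let g : Ordinal → Ordinal := fun δ => if h : δ < α then (hstep δ h).choose else 0
    have hg : ∀ δ, δ < α → g δ ∈ C ∧ δ + 1 ≤ g δ ∧ g δ < α := by
      intro δ h
      simp only [g, dif_pos h]
      exact (hstep δ h).choose_spec
    have hglt : ∀ δ, δ < α → δ < g δ := fun δ h =>
      lt_of_lt_of_le (by rw [Ordinal.add_one_eq_succ]; exact Order.lt_succ δ) (hg δ h).2.1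
    let s : ℕ → Ordinal := fun n => Nat.rec (g β) (fun _ x => g x) n
    have hs_lt : ∀ n, s n < α := by
      intro n
      induction n with
      | zero => exact (hg β hβ).2.2
      | succ n ih => exact (hg _ ih).2.2
    have hs_mem : ∀ n, s n ∈ C := by
      intro n
      cases n with
      | zero => exact (hg β hβ).1
      | succ n => exact (hg _ (hs_lt n)).1
    have hs_mono : ∀ n, s n < s (n + 1) := fun n => hglt _ (hs_lt n)
    set dstar := ⨆ n, s n with hdstar
    have hdα : dstar < α := Ordinal.iSup_lt_of_lt_cof (by rw [Cardinal.mk_nat]; exact hα) hs_lt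
    have hsle : ∀ n, s n ≤ dstar := fun n => Ordinal.le_iSup s n
    refine ⟨dstar, ⟨⟨⟨s 0, hs_mem 0, lt_of_lt_of_le (hs_mono 0) (hsle 1)⟩, ?_⟩, hdα⟩,
      le_trans (hglt β hβ).le (hsle 0), hdα⟩
    refine sSup_eq_of_forall_exists (fun z hz => hz.2) fun ε hε => ?_
    obtain ⟨n, hn⟩ := Ordinal.lt_iSup_iff.1 hε
    exact ⟨s (n + 1), ⟨hs_mem (n + 1), lt_of_lt_of_le (hs_mono (n + 1)) (hsle (n + 2))⟩,
      lt_trans hn (hs_mono n)⟩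

/-- Removing an initial segment from a club leaves a club. -/
lemma isClubIn_inter_Ioi {A : Set Ordinal.{0}} {α b : Ordinal.{0}} (hα : Order.IsSuccLimit α)
    (hA : IsClubIn A α) (hb : b < α) : IsClubIn (A ∩ Ioi b) α := by
  refine ⟨fun x hx => hA.1 hx.1, ?_, ?_⟩
  · intro δ hδ hne hsup
    obtain ⟨x, hx⟩ := hne
    refine ⟨hA.2.1 δ hδ ⟨x, hx.1.1, hx.2⟩ ?_, Set.mem_Ioi.2 (lt_trans hx.1.2 hx.2)⟩
    refine le_antisymm (csSup_le' fun y hy => hy.2.le) ?_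
    calc δ = sSup ((A ∩ Ioi b) ∩ Iio δ) := hsup.symm
      _ ≤ sSup (A ∩ Iio δ) := csSup_le_csSup
          (bddAbove_of_subset_Iio fun y hy => hy.2) ⟨x, hx⟩
          (fun y hy => ⟨hy.1.1, hy.2⟩)
  · intro β hβ
    have hm : max β (b + 1) < α :=
      max_lt hβ (by rw [Ordinal.add_one_eq_succ]; exact hα.succ_lt hb)
    obtain ⟨γ, hγA, hγ1, hγ2⟩ := hA.2.2 _ hm
    exact ⟨γ, ⟨hγA, lt_of_lt_of_le (by rw [Ordinal.add_one_eq_succ]; exact Order.lt_succ b)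
      (le_trans (le_max_right _ _) hγ1)⟩, le_trans (le_max_left _ _) hγ1, hγ2⟩

/-- A proper initial segment of a set of ordinals has strictly smaller order type. -/
lemma lt_add_one_iff_ord {a b : Ordinal.{0}} : a < b + 1 ↔ a ≤ b := by
  rw [Ordinal.add_one_eq_succ, Order.lt_succ_iff]

lemma ordType_initial_lt {B : Set Ordinal.{0}} {b : Ordinal.{0}} (hb : b ∈ B) :
    ordType (B ∩ Iio b) < ordType B := by
  refine PrincipalSeg.ordinal_type_lt
    ⟨⟨⟨fun x => ⟨x.1, x.2.1⟩, fun x y h => ?_⟩, Iff.rfl⟩, ⟨b, hb⟩, fun y => ?_⟩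
  · simpa [Subtype.ext_iff] using h
  · constructor
    · rintro ⟨x, rfl⟩
      exact x.2.2
    · intro hy
      exact ⟨⟨y.1, y.2, hy⟩, Subtype.ext rfl⟩

/-! ### Main theorem -/

/-- If `□_κ` holds then every stationary subset of `κ⁺` has a stationary subset that
does not reflect. -/
theorem square_implies_nonreflecting_stationary_subset
    (κ : Cardinal) (hκ : Cardinal.aleph0 ≤ κ) (hsq : Square κ)
    (S : Set Ordinal) (hS : IsStationaryIn S (Order.succ κ).ord) :
    ∃ T ⊆ S, IsStationaryIn T (Order.succ κ).ord ∧ ¬ Reflects T (Order.succ κ).ord := by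
  classical
  obtain ⟨C, hC⟩ := hsq
  set L := (Order.succ κ).ord with hLdef
  have hreg : Cardinal.IsRegular (Order.succ κ) := Cardinal.isRegular_succ hκ
  have hcofL : L.cof = Order.succ κ := hreg.cof_eq
  have haleph : Cardinal.aleph0 < L.cof := by
    rw [hcofL]; exact lt_of_le_of_lt hκ (Order.lt_succ κ)
  have hLlim : Order.IsSuccLimit L := Ordinal.aleph0_le_cof.1 haleph.le
  have hω : ∀ β < L, β + Ordinal.omega0 < L := by
    intro β hβ
    rw [Cardinal.lt_ord, Ordinal.card_add, Ordinal.card_omega0]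
    exact Cardinal.add_lt_of_lt (hκ.trans (Order.le_succ κ))
      (Cardinal.lt_ord.1 hβ) (lt_of_le_of_lt hκ (Order.lt_succ κ))
  -- the order-type function, pulled down to `Ordinal.{0}`
  let f : Ordinal → Ordinal := fun β =>
    if h : ordType (C β) ≤ Ordinal.lift.{1, 0} κ.ord then (Set.mem_range.1 (Ordinal.mem_range_lift_of_le h)).choose else 0
  have hf : ∀ β, ordType (C β) ≤ Ordinal.lift.{1, 0} κ.ord →
      Ordinal.lift.{1, 0} (f β) = ordType (C β) := by
    intro β h
    simp only [f, dif_pos h]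
    exact (Set.mem_range.1 (Ordinal.mem_range_lift_of_le h)).choose_spec
  -- restrict to limit points
  set S' : Set Ordinal := S ∩ (Iio L ∩ {β | Order.IsSuccLimit β}) with hS'def
  have hS' : IsStationaryIn S' L := stationary_inter haleph hS (isClubIn_limits hLlim hω)
  have hS'lim : ∀ β ∈ S', β < L ∧ Order.IsSuccLimit β := fun β hβ => ⟨hβ.2.1, hβ.2.2⟩
  have hfle : ∀ β ∈ S', f β ≤ κ.ord ∧ Ordinal.lift.{1, 0} (f β) = ordType (C β) := by
    intro β hβ
    have h := (hC β (hS'lim β hβ).1 (hS'lim β hβ).2).2.1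
    refine ⟨?_, hf β h⟩
    rw [← Ordinal.lift_le.{1}, hf β h]
    exact h
  -- pigeonhole: some fiber of `f` on `S'` is stationary
  have hexists : ∃ ξ, ξ ≤ κ.ord ∧ IsStationaryIn {β | β ∈ S' ∧ f β = ξ} L := by
    by_contra hcon
    push_neg at hcon
    have hnc : ∀ ξ ≤ κ.ord, ∃ D, IsClubIn D L ∧ ({β | β ∈ S' ∧ f β = ξ} ∩ D) = ∅ := by
      intro ξ hξ
      have h := hcon ξ hξ
      rw [IsStationaryIn, not_and_or] at h
      rcases h with h | h
      · exact absurd (fun x hx => hS'.1 hx.1) h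
      · push_neg at h
        obtain ⟨D, hD, hne⟩ := h
        exact ⟨D, hD, hne⟩
    have hne0 : (κ.ord + 1 : Ordinal) ≠ 0 :=
      pos_iff_ne_zero.1 (lt_add_one_iff_ord.2 zero_le)
    haveI : Nonempty (κ.ord + 1 : Ordinal).ToType := Ordinal.toType_nonempty_iff_ne_zero.2 hne0
    let ξf : (κ.ord + 1 : Ordinal).ToType → Ordinal := fun i =>
      ((Ordinal.ToType.mk).symm i).1
    have hξf : ∀ i, ξf i ≤ κ.ord := by
      intro i
      have h := ((Ordinal.ToType.mk (o := κ.ord + 1)).symm i).2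
      exact lt_add_one_iff_ord.1 h
    choose Dc hDc hDce using fun i => hnc (ξf i) (hξf i)
    have hcount : Cardinal.mk (κ.ord + 1 : Ordinal).ToType < L.cof := by
      rw [Cardinal.mk_toType, Ordinal.add_one_eq_succ, Ordinal.card_succ, Cardinal.card_ord,
        Cardinal.add_one_eq hκ, hcofL]
      exact Order.lt_succ κ
    have hclub : IsClubIn (⋂ i, Dc i) L := isClubIn_iInter haleph hcount hDc
    obtain ⟨x, hxS', hxD⟩ := hS'.2 _ hclub
    obtain ⟨hfx, _⟩ := hfle x hxS'
    let i : (κ.ord + 1 : Ordinal).ToType :=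
      Ordinal.ToType.mk ⟨f x, Set.mem_Iio.2 (lt_add_one_iff_ord.2 hfx)⟩
    have hξfi : ξf i = f x := by
      simp only [ξf, i, OrderIso.symm_apply_apply]
    have hx : x ∈ {β | β ∈ S' ∧ f β = ξf i} ∩ Dc i :=
      ⟨⟨hxS', hξfi.symm⟩, mem_iInter.1 hxD i⟩
    exact (Set.eq_empty_iff_forall_notMem.1 (hDce i) x) hx
  obtain ⟨ξ, hξ, hTstat⟩ := hexists
  set T : Set Ordinal := {β | β ∈ S' ∧ f β = ξ} with hTdef
  refine ⟨T, fun x hx => hx.1.1, hTstat, ?_⟩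
  -- non-reflection
  rintro ⟨α, hαL, hcofα, hstatα⟩
  have hαlim : Order.IsSuccLimit α := Ordinal.aleph0_le_cof.1 hcofα.le
  obtain ⟨hCα, _, hcoh⟩ := hC α hαL hαlim
  have hAclub : IsClubIn (AccPts (C α) ∩ Iio α) α := accPts_isClubIn hcofα hCα
  obtain ⟨β₁, hβ₁T, hβ₁A⟩ := hstatα.2 _ hAclub
  have hA2club : IsClubIn ((AccPts (C α) ∩ Iio α) ∩ Ioi β₁) α :=
    isClubIn_inter_Ioi hαlim hAclub hβ₁A.2
  obtain ⟨β₂, hβ₂T, hβ₂A⟩ := hstatα.2 _ hA2club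
  have hlt : β₁ < β₂ := hβ₂A.2
  have e1 : C β₁ = C α ∩ Iio β₁ := hcoh β₁ hβ₁A.1
  have e2 : C β₂ = C α ∩ Iio β₂ := hcoh β₂ hβ₂A.1.1
  have hβ₁C : β₁ ∈ C α := hCα.2.1 β₁ hβ₁A.2 hβ₁A.1.1 hβ₁A.1.2
  have key : ordType (C β₁) < ordType (C β₂) := by
    rw [e1, e2]
    have heq : C α ∩ Iio β₁ = (C α ∩ Iio β₂) ∩ Iio β₁ := by
      rw [inter_assoc, Set.Iio_inter_Iio, min_eq_right hlt.le]
    rw [heq]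
    exact ordType_initial_lt ⟨hβ₁C, hlt⟩
  have h1 := hfle β₁ hβ₁T.1.1
  have h2 := hfle β₂ hβ₂T.1.1
  have hf1 : f β₁ = ξ := hβ₁T.1.2
  have hf2 : f β₂ = ξ := hβ₂T.1.2
  rw [← h1.2, ← h2.2, hf1, hf2] at key
  exact lt_irrefl _ key

end PaperStatementOne
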